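/- For every binary word c of length n ≥ 1, every integer m with n < m ≤ 2^{⌊log₂ n⌋+1}, and every residue a modulo m, there exists a binary word x of length n that agrees with c at every position whose (1-based) index is not a power of two, and such that σ(x) ≡ a (mod m). In particular, x differs from c in at most ⌊log₂ n⌋ + 1 positions, namely only at positions in {2^0, 2^1, …, 2^{⌊log₂ n⌋}}. -/

import Mathlib

/-- The moment of a binary word `x = x_1 … x_n`: `σ(x) = ∑ i, i * x_i` (1-based indexing). -/
def mom {n : ℕ} (x : Fin n → Bool) : ℕ :=
  ∑ i : Fin n, ((i : ℕ) + 1) * (if x i then 1 else 0)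

lemma sum_testBit : ∀ (L t : ℕ), t < 2 ^ (L + 1) →
    ∑ k ∈ Finset.range (L + 1), 2 ^ k * (if t.testBit k then 1 else 0) = t := by
  intro L
  induction L with
  | zero =>
    intro t ht
    interval_cases t <;> simp
  | succ L ih =>
    intro t ht
    rw [Finset.sum_range_succ']
    have h2 : t / 2 < 2 ^ (L + 1) := by
      rw [Nat.div_lt_iff_lt_mul (by norm_num)]
      calc t < 2 ^ (L + 1 + 1) := ht
        _ = 2 ^ (L + 1) * 2 := by ring
    have := ih (t / 2) h2
    have heq : ∑ k ∈ Finset.range (L + 1), 2 ^ (k + 1) * (if t.testBit (k + 1) then 1 else 0)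
        = 2 * ∑ k ∈ Finset.range (L + 1), 2 ^ k * (if (t / 2).testBit k then 1 else 0) := by
      rw [Finset.mul_sum]
      apply Finset.sum_congr rfl
      intro k _
      rw [Nat.testBit_succ]
      ring
    rw [heq, this]
    have hb : (if t.testBit 0 then 1 else 0) = t % 2 := by
      rcases Nat.mod_two_eq_zero_or_one t with h | h <;>
        simp [Nat.testBit_zero, h]
    simp only [pow_zero, one_mul, hb]
    omega

/-- Any binary word of length `n ≥ 1` can be modified only at positions
whose (1-based) index is a power of two so that its moment is congruent to any
prescribed residue `a` modulo `m`, where `n < m ≤ 2^(⌊log₂ n⌋ + 1)`. In particular at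
most `⌊log₂ n⌋ + 1` bits are flipped, only at positions in `{2^0, …, 2^(⌊log₂ n⌋)}`. -/
theorem stmt1 {n : ℕ} (hn : 1 ≤ n) (c : Fin n → Bool) (m a : ℕ)
    (hm1 : n < m) (hm2 : m ≤ 2 ^ (Nat.log 2 n + 1)) :
    ∃ x : Fin n → Bool,
      (∀ i : Fin n, (¬ ∃ k, (i : ℕ) + 1 = 2 ^ k) → x i = c i) ∧
      mom x ≡ a [MOD m] ∧
      hammingDist c x ≤ Nat.log 2 n + 1 ∧
      (∀ i : Fin n, x i ≠ c i → ∃ k ≤ Nat.log 2 n, (i : ℕ) + 1 = 2 ^ k) := by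
  set L := Nat.log 2 n with hL
  have hm0 : 0 < m := by omega
  have hpow : ∀ i : Fin n, (∃ k, (i : ℕ) + 1 = 2 ^ k) ↔
      (i : ℕ) + 1 = 2 ^ Nat.log 2 ((i : ℕ) + 1) := by
    intro i
    constructor
    · rintro ⟨k, hk⟩
      rw [hk, Nat.log_pow one_lt_two]
    · intro h
      exact ⟨_, h⟩
  set P : Finset (Fin n) :=
    Finset.univ.filter (fun i => (i : ℕ) + 1 = 2 ^ Nat.log 2 ((i : ℕ) + 1)) with hP
  set S : ℕ := ∑ i ∈ Pᶜ, ((i : ℕ) + 1) * (if c i then 1 else 0) with hS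
  set t : ℕ := (a % m + m - S % m) % m with ht
  have htm : t < m := Nat.mod_lt _ hm0
  have htlt : t < 2 ^ (L + 1) := lt_of_lt_of_le htm hm2
  set x : Fin n → Bool := fun i =>
    if (i : ℕ) + 1 = 2 ^ Nat.log 2 ((i : ℕ) + 1) then t.testBit (Nat.log 2 ((i : ℕ) + 1))
    else c i with hx
  have hxnp : ∀ i : Fin n, (¬ ∃ k, (i : ℕ) + 1 = 2 ^ k) → x i = c i := by
    intro i hi
    rw [hpow i] at hi
    simp [hx, hi]
  -- the bijection
  have hgk : ∀ k : Fin (L + 1), 2 ^ (k : ℕ) - 1 < n := by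
    intro k
    have h1 : 2 ^ (k : ℕ) ≤ 2 ^ L := Nat.pow_le_pow_right (by norm_num) (by omega)
    have h2 : 2 ^ L ≤ n := Nat.pow_log_le_self 2 (by omega)
    have h3 : 0 < 2 ^ (k : ℕ) := Nat.pow_pos (by norm_num)
    omega
  set g : Fin (L + 1) → Fin n := fun k => ⟨2 ^ (k : ℕ) - 1, hgk k⟩ with hg
  have hgval : ∀ k : Fin (L + 1), ((g k : ℕ) + 1) = 2 ^ (k : ℕ) := by
    intro k
    have h3 : 0 < 2 ^ (k : ℕ) := Nat.pow_pos (by norm_num)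
    simp only [hg]
    omega
  have hginj : Function.Injective g := by
    intro k1 k2 h
    have := congrArg (fun i : Fin n => (i : ℕ) + 1) h
    simp only [hgval] at this
    exact Fin.ext (Nat.pow_right_injective (le_refl 2) this)
  have hPim : P = Finset.univ.image g := by
    ext i
    simp only [hP, Finset.mem_filter, Finset.mem_univ, true_and, Finset.mem_image]
    constructor
    · intro h
      have hk : Nat.log 2 ((i : ℕ) + 1) ≤ L := by
        rw [hL]
        exact Nat.log_mono_right (by omega)
      refine ⟨⟨Nat.log 2 ((i : ℕ) + 1), by omega⟩, ?_⟩
      apply Fin.ext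
      have := hgval ⟨Nat.log 2 ((i : ℕ) + 1), by omega⟩
      simp only at this ⊢
      omega
    · rintro ⟨k, -, rfl⟩
      rw [hgval k, Nat.log_pow one_lt_two]
  have hmomx : mom x = S + t := by
    have hsplit : mom x = (∑ i ∈ P, ((i : ℕ) + 1) * (if x i then 1 else 0)) +
        ∑ i ∈ Pᶜ, ((i : ℕ) + 1) * (if x i then 1 else 0) :=
      (Finset.sum_add_sum_compl P _).symm
    have hcompl : ∑ i ∈ Pᶜ, ((i : ℕ) + 1) * (if x i then 1 else 0) = S := by
      rw [hS]
      apply Finset.sum_congr rfl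
      intro i hi
      simp only [Finset.mem_compl, hP, Finset.mem_filter, Finset.mem_univ, true_and] at hi
      simp [hx, hi]
    have hPsum : ∑ i ∈ P, ((i : ℕ) + 1) * (if x i then 1 else 0) = t := by
      rw [hPim, Finset.sum_image (fun k _ k' _ h => hginj h)]
      have : ∀ k : Fin (L + 1), ((g k : ℕ) + 1) * (if x (g k) then 1 else 0)
          = 2 ^ (k : ℕ) * (if t.testBit (k : ℕ) then 1 else 0) := by
        intro k
        have h1 := hgval k
        simp [hx, h1, Nat.log_pow one_lt_two]
      rw [Finset.sum_congr rfl (fun k _ => this k)]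
      rw [Fin.sum_univ_eq_sum_range (fun j => 2 ^ j * (if t.testBit j then 1 else 0)) (L + 1)]
      exact sum_testBit L t htlt
    rw [hsplit, hcompl, hPsum]; ring
  refine ⟨x, hxnp, ?_, ?_, ?_⟩
  · rw [hmomx]
    have h1 : S % m < m := Nat.mod_lt _ hm0
    have h2 : S % m ≤ S := Nat.mod_le S m
    have h3 : m * (S / m) + S % m = S := Nat.div_add_mod S m
    have e : S + (a % m + m - S % m) = m * (S / m) + m + a % m := by omega
    have h4 : (m * (S / m) + m) + a % m ≡ 0 + a [MOD m] :=
      Nat.ModEq.add (Nat.modEq_zero_iff_dvd.2 ⟨S / m + 1, by ring⟩) (Nat.mod_modEq a m)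
    rw [zero_add] at h4
    calc S + t ≡ S + (a % m + m - S % m) [MOD m] :=
          Nat.ModEq.add_left _ (Nat.mod_modEq _ _)
      _ = m * (S / m) + m + a % m := e
      _ ≡ a [MOD m] := h4
  · have hsub : Finset.univ.filter (fun i => c i ≠ x i) ⊆ P := by
      intro i hi
      simp only [Finset.mem_filter, Finset.mem_univ, true_and] at hi
      simp only [hP, Finset.mem_filter, Finset.mem_univ, true_and]
      by_contra h
      apply hi
      simp [hx, h]
    calc hammingDist c x ≤ P.card := Finset.card_le_card hsub
      _ ≤ (Finset.univ : Finset (Fin (L + 1))).card := by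
          rw [hPim]; exact Finset.card_image_le
      _ = L + 1 := by simp
  · intro i hi
    have h : (i : ℕ) + 1 = 2 ^ Nat.log 2 ((i : ℕ) + 1) := by
      by_contra h
      exact hi (by simp [hx, h])
    exact ⟨Nat.log 2 ((i : ℕ) + 1), Nat.log_mono_right (by omega), h⟩
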